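/- arXiv:1312.5180 — 4 statements merged into one kernel-verified Lean document; each statement's English description precedes it below -/
import Mathlib

section
/- The disjoint union of p copies of K_{3,3} (a graph on n = 6p vertices) has exactly 3^(n/3) maximal induced matchings. -/
/-- An induced matching: a set of edges of `G`, pairwise disjoint, such that
no edge of `G` joins endpoints of two distinct edges of the matching. -/
def IsInducedMatching {V : Type*} (G : SimpleGraph V) (M : Finset (Sym2 V)) : Prop :=
  (∀ e ∈ M, e ∈ G.edgeSet) ∧
    ∀ e ∈ M, ∀ f ∈ M, e ≠ f → ∀ x ∈ e, ∀ y ∈ f, x ≠ y ∧ ¬ G.Adj x y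

/-- `M` covers the vertex `v` if `v` is an endpoint of an edge of `M`. -/
def MCovers {V : Type*} (M : Finset (Sym2 V)) (v : V) : Prop := ∃ e ∈ M, v ∈ e

/-- A maximal induced matching. -/
def IsMaximalInducedMatching {V : Type*} (G : SimpleGraph V) (M : Finset (Sym2 V)) : Prop :=
  IsInducedMatching G M ∧ ∀ M', IsInducedMatching G M' → M ⊆ M' → M' = M

/-- The number of maximal induced matchings of `G`. -/
noncomputable def mimCount {V : Type*} (G : SimpleGraph V) : ℕ :=
  {M : Finset (Sym2 V) | IsMaximalInducedMatching G M}.ncard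

/-- The disjoint union of `p` copies of `K_{3,3}`, on vertex set `Fin p × (Fin 3 ⊕ Fin 3)`. -/
def copiesK33 (p : ℕ) : SimpleGraph (Fin p × (Fin 3 ⊕ Fin 3)) where
  Adj a b := a.1 = b.1 ∧ (completeBipartiteGraph (Fin 3) (Fin 3)).Adj a.2 b.2
  symm := ⟨fun a b h => ⟨h.1.symm, (completeBipartiteGraph (Fin 3) (Fin 3)).adj_symm h.2⟩⟩
  loopless := ⟨fun a h => (completeBipartiteGraph (Fin 3) (Fin 3)).loopless.irrefl a.2 h.2⟩

abbrev Vtx (p : ℕ) := Fin p × (Fin 3 ⊕ Fin 3)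

def edgeOf {p : ℕ} (i : Fin p) (ab : Fin 3 × Fin 3) : Sym2 (Vtx p) :=
  s((i, Sum.inl ab.1), (i, Sum.inr ab.2))

lemma mem_edgeSet_iff {p : ℕ} (e : Sym2 (Vtx p)) :
    e ∈ (copiesK33 p).edgeSet ↔ ∃ i ab, e = edgeOf i ab := by
  induction e using Sym2.inductionOn with
  | hf x y =>
    simp only [SimpleGraph.mem_edgeSet]
    constructor
    · rintro ⟨h1, h2⟩
      obtain ⟨i, u⟩ := x
      obtain ⟨j, v⟩ := y
      simp only at h1
      subst h1
      rcases u with a | a <;> rcases v with b | b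
      · simp [completeBipartiteGraph] at h2
      · exact ⟨i, (a, b), rfl⟩
      · exact ⟨i, (b, a), Sym2.eq_swap⟩
      · simp [completeBipartiteGraph] at h2
    · rintro ⟨i, ⟨a, b⟩, h⟩
      rw [edgeOf] at h
      rcases Sym2.eq_iff.mp h with ⟨rfl, rfl⟩ | ⟨rfl, rfl⟩ <;>
        simp [copiesK33, completeBipartiteGraph]

lemma edgeOf_inj {p : ℕ} {i j : Fin p} {ab cd : Fin 3 × Fin 3}
    (h : edgeOf i ab = edgeOf j cd) : i = j ∧ ab = cd := by
  rw [edgeOf, edgeOf] at h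
  rcases Sym2.eq_iff.mp h with ⟨h1, h2⟩ | ⟨h1, h2⟩
  · have e1 := Prod.ext_iff.mp h1
    have e2 := Prod.ext_iff.mp h2
    exact ⟨e1.1, Prod.ext (Sum.inl.inj e1.2) (Sum.inr.inj e2.2)⟩
  · exact absurd (Prod.ext_iff.mp h1).2 (by simp)

lemma fst_mem_edgeOf {p : ℕ} {i : Fin p} {ab : Fin 3 × Fin 3} {x : Vtx p}
    (h : x ∈ edgeOf i ab) : x.1 = i := by
  rw [edgeOf, Sym2.mem_iff] at h
  rcases h with rfl | rfl <;> rfl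

/-- two distinct edges within the same copy violate the induced condition -/
lemma not_two_in_copy {p : ℕ} {M : Finset (Sym2 (Vtx p))}
    (hM : IsInducedMatching (copiesK33 p) M) {i : Fin p} {ab cd : Fin 3 × Fin 3}
    (h1 : edgeOf i ab ∈ M) (h2 : edgeOf i cd ∈ M) : ab = cd := by
  by_contra hne
  have hne' : edgeOf i ab ≠ edgeOf i cd := fun h => hne (edgeOf_inj h).2
  have := (hM.2 _ h1 _ h2 hne' (i, Sum.inl ab.1) (by rw [edgeOf]; simp)
    (i, Sum.inr cd.2) (by rw [edgeOf]; simp)).2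
  exact this ⟨rfl, Or.inl ⟨rfl, rfl⟩⟩

def Mof {p : ℕ} (f : Fin p → Fin 3 × Fin 3) : Finset (Sym2 (Vtx p)) :=
  Finset.univ.image (fun i => edgeOf i (f i))

lemma mem_Mof {p : ℕ} {f : Fin p → Fin 3 × Fin 3} {e : Sym2 (Vtx p)} :
    e ∈ Mof f ↔ ∃ i, e = edgeOf i (f i) := by
  simp [Mof, eq_comm]

lemma Mof_inducedMatching {p : ℕ} (f : Fin p → Fin 3 × Fin 3) :
    IsInducedMatching (copiesK33 p) (Mof f) := by
  constructor
  · intro e he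
    obtain ⟨i, rfl⟩ := mem_Mof.mp he
    exact (mem_edgeSet_iff _).mpr ⟨i, f i, rfl⟩
  · intro e he e' he' hne x hx y hy
    obtain ⟨i, rfl⟩ := mem_Mof.mp he
    obtain ⟨j, rfl⟩ := mem_Mof.mp he'
    have hij : i ≠ j := fun h => hne (by rw [h])
    have hx1 := fst_mem_edgeOf hx
    have hy1 := fst_mem_edgeOf hy
    constructor
    · intro h; exact hij (by rw [← hx1, h, hy1])
    · intro h; exact hij (by rw [← hx1, ← hy1, h.1])

lemma Mof_maximal {p : ℕ} (f : Fin p → Fin 3 × Fin 3) :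
    IsMaximalInducedMatching (copiesK33 p) (Mof f) := by
  refine ⟨Mof_inducedMatching f, fun M' hM' hsub => ?_⟩
  apply Finset.Subset.antisymm _ hsub
  intro e he
  obtain ⟨i, ab, rfl⟩ := (mem_edgeSet_iff e).mp (hM'.1 e he)
  have hi : edgeOf i (f i) ∈ M' := hsub (mem_Mof.mpr ⟨i, rfl⟩)
  have : ab = f i := not_two_in_copy hM' he hi
  exact mem_Mof.mpr ⟨i, by rw [this]⟩

lemma maximal_eq_Mof {p : ℕ} {M : Finset (Sym2 (Vtx p))}
    (hM : IsMaximalInducedMatching (copiesK33 p) M) :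
    ∃ f : Fin p → Fin 3 × Fin 3, M = Mof f := by
  -- each copy has at least one edge
  have hex : ∀ i : Fin p, ∃ ab, edgeOf i ab ∈ M := by
    intro i
    by_contra hno
    push_neg at hno
    -- add edgeOf i (0,0)
    set e0 : Sym2 (Vtx p) := edgeOf i (0, 0) with he0
    have he0M : e0 ∉ M := hno (0, 0)
    have : IsInducedMatching (copiesK33 p) (insert e0 M) := by
      constructor
      · intro e he
        rcases Finset.mem_insert.mp he with rfl | he
        · exact (mem_edgeSet_iff _).mpr ⟨i, (0,0), rfl⟩
        · exact hM.1.1 e he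
      · intro e he e' he' hne x hx y hy
        rcases Finset.mem_insert.mp he with rfl | he <;>
          rcases Finset.mem_insert.mp he' with rfl | he'
        · exact absurd rfl hne
        · -- e = e0, e' ∈ M
          obtain ⟨j, cd, rfl⟩ := (mem_edgeSet_iff e').mp (hM.1.1 e' he')
          have hij : i ≠ j := fun h => hno cd (h ▸ he')
          have hx1 := fst_mem_edgeOf hx
          have hy1 := fst_mem_edgeOf hy
          exact ⟨fun h => hij (by rw [← hx1, h, hy1]),
            fun h => hij (by rw [← hx1, ← hy1, h.1])⟩
        · obtain ⟨j, cd, rfl⟩ := (mem_edgeSet_iff e).mp (hM.1.1 e he)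
          have hij : i ≠ j := fun h => hno cd (h ▸ he)
          have hx1 := fst_mem_edgeOf hx
          have hy1 := fst_mem_edgeOf hy
          exact ⟨fun h => hij (by rw [← hy1, ← h, hx1]),
            fun h => hij (by rw [← hy1, ← h.1, hx1])⟩
        · exact hM.1.2 e he e' he' hne x hx y hy
    have := hM.2 _ this (Finset.subset_insert _ _)
    exact he0M (this ▸ Finset.mem_insert_self e0 M)
  choose f hf using hex
  refine ⟨f, Finset.Subset.antisymm ?_ ?_⟩
  · intro e he
    obtain ⟨i, ab, rfl⟩ := (mem_edgeSet_iff e).mp (hM.1.1 e he)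
    have : ab = f i := not_two_in_copy hM.1 he (hf i)
    exact mem_Mof.mpr ⟨i, by rw [this]⟩
  · intro e he
    obtain ⟨i, rfl⟩ := mem_Mof.mp he
    exact hf i

/-- The disjoint union of `p` copies of `K_{3,3}` (a graph on `n = 6p` vertices)
has exactly `3^(n/3)` maximal induced matchings. -/
theorem mimCount_copiesK33 (p : ℕ) :
    mimCount (copiesK33 p) = 3 ^ ((6 * p) / 3) := by
  have hset : {M : Finset (Sym2 (Vtx p)) | IsMaximalInducedMatching (copiesK33 p) M}
      = Set.range (Mof (p := p)) := by
    ext M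
    constructor
    · intro h
      obtain ⟨f, rfl⟩ := maximal_eq_Mof h
      exact ⟨f, rfl⟩
    · rintro ⟨f, rfl⟩
      exact Mof_maximal f
  have hinj : Function.Injective (Mof (p := p)) := by
    intro f g h
    funext i
    have : edgeOf i (f i) ∈ Mof g := h ▸ mem_Mof.mpr ⟨i, rfl⟩
    obtain ⟨j, hj⟩ := mem_Mof.mp this
    obtain ⟨rfl, h2⟩ := edgeOf_inj hj
    exact h2
  rw [mimCount, hset, ← Nat.card_coe_set_eq, Nat.card_range_of_injective hinj]
  simp only [Nat.card_eq_fintype_card, Fintype.card_fun, Fintype.card_prod, Fintype.card_fin]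
  have : 6 * p / 3 = 2 * p := by omega
  rw [this, pow_mul]; norm_num
end

section
/- Let G be a finite simple graph and let u, v be vertices such that no maximal induced matching of G covers both u and v. Then |M_{G_{u→v}}| ≥ |M_G| or |M_{G_{v→u}}| ≥ |M_G|, where M_H denotes the set of maximal induced matchings of H. -/
/-- `G_{u→v}`: the graph obtained from `G` by making `u` into a (false) twin of `v`:
all edges not incident with `u` are kept, and the neighbourhood of `u` becomes that of `v`. -/
def moveTwin {V : Type*} (G : SimpleGraph V) (u v : V) : SimpleGraph V where
  Adj x y :=
    (x = u ∧ y ≠ u ∧ G.Adj v y) ∨ (y = u ∧ x ≠ u ∧ G.Adj v x) ∨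
      (x ≠ u ∧ y ≠ u ∧ G.Adj x y)
  symm := by
    constructor
    rintro x y (⟨h1, h2, h3⟩ | ⟨h1, h2, h3⟩ | ⟨h1, h2, h3⟩)
    · exact Or.inr (Or.inl ⟨h1, h2, h3⟩)
    · exact Or.inl ⟨h1, h2, h3⟩
    · exact Or.inr (Or.inr ⟨h2, h1, h3.symm⟩)
  loopless := by
    constructor
    rintro x (⟨h1, h2, _⟩ | ⟨h1, h2, _⟩ | ⟨_, _, h3⟩)
    exacts [h2 h1, h2 h1, G.ne_of_adj h3 rfl]

namespace MimAux

attribute [local instance] Classical.propDecidable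

variable {V : Type*} {G : SimpleGraph V} {u v : V} {M : Finset (Sym2 V)}

lemma inducedMatching_subset {M M' : Finset (Sym2 V)}
    (h : IsInducedMatching G M') (hs : M ⊆ M') : IsInducedMatching G M :=
  ⟨fun e he => h.1 e (hs he), fun e he f hf => h.2 e (hs he) f (hs hf)⟩

lemma maximal_iff :
    IsMaximalInducedMatching G M ↔ IsInducedMatching G M ∧
      ∀ e, e ∉ M → ¬ IsInducedMatching G (insert e M) := by
  constructor
  · rintro ⟨hi, hmax⟩
    refine ⟨hi, fun e he hind => he ?_⟩
    have := hmax _ hind (Finset.subset_insert e M)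
    rw [← this]; exact Finset.mem_insert_self e M
  · rintro ⟨hi, hni⟩
    refine ⟨hi, fun M' hM' hsub => ?_⟩
    by_contra hne
    obtain ⟨e, heM', heM⟩ := Finset.exists_of_ssubset (hsub.ssubset_of_ne (Ne.symm hne))
    exact hni e heM (inducedMatching_subset hM' (Finset.insert_subset heM' hsub))

lemma moveTwin_adj_iff {x y : V} (hx : x ≠ u) (hy : y ≠ u) :
    (moveTwin G u v).Adj x y ↔ G.Adj x y := by
  simp [moveTwin, hx, hy]

lemma moveTwin_adj_u_iff {y : V} :
    (moveTwin G u v).Adj u y ↔ y ≠ u ∧ G.Adj v y := by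
  constructor
  · rintro (⟨_, h2, h3⟩ | ⟨h1, h2, _⟩ | ⟨h1, _, _⟩)
    exacts [⟨h2, h3⟩, absurd rfl h2, absurd rfl h1]
  · rintro ⟨h1, h2⟩; exact Or.inl ⟨rfl, h1, h2⟩

lemma not_mem_of_avoids (hu : ∀ e ∈ M, u ∉ e) {e : Sym2 V} (he : e ∈ M) {x : V}
    (hx : x ∈ e) : x ≠ u := fun h => hu e he (h ▸ hx)

lemma induced_iff_of_avoids (hM : ∀ e ∈ M, u ∉ e) :
    IsInducedMatching G M ↔ IsInducedMatching (moveTwin G u v) M := by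
  constructor <;> rintro ⟨h1, h2⟩ <;> refine ⟨?_, ?_⟩
  · intro e he
    induction e using Sym2.ind with
    | _ a b =>
      rw [SimpleGraph.mem_edgeSet]
      rw [moveTwin_adj_iff (not_mem_of_avoids hM he (by simp)) (not_mem_of_avoids hM he (by simp))]
      exact h1 _ he
  · intro e he f hf hef x hx y hy
    obtain ⟨hxy, hadj⟩ := h2 e he f hf hef x hx y hy
    refine ⟨hxy, ?_⟩
    rw [moveTwin_adj_iff (not_mem_of_avoids hM he hx) (not_mem_of_avoids hM hf hy)]
    exact hadj
  · intro e he
    induction e using Sym2.ind with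
    | _ a b =>
      have := h1 _ he
      rw [SimpleGraph.mem_edgeSet] at this ⊢
      rw [moveTwin_adj_iff (not_mem_of_avoids hM he (by simp))
        (not_mem_of_avoids hM he (by simp))] at this
      exact this
  · intro e he f hf hef x hx y hy
    obtain ⟨hxy, hadj⟩ := h2 e he f hf hef x hx y hy
    refine ⟨hxy, ?_⟩
    rw [moveTwin_adj_iff (not_mem_of_avoids hM he hx) (not_mem_of_avoids hM hf hy)] at hadj
    exact hadj


/-- Auxiliary: if `M` is a maximal induced matching of `G` avoiding `u` and `v`,
then no edge at `u` can be added to `M` in `moveTwin G u v`. -/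
lemma auxA (hind : IsInducedMatching G M) (hu : ∀ e ∈ M, u ∉ e) (hv : ∀ e ∈ M, v ∉ e)
    (hmax : ∀ e, e ∉ M → ¬ IsInducedMatching G (insert e M)) (b : V)
    (hIns : IsInducedMatching (moveTwin G u v) (insert s(u, b) M)) : False := by
  have hadj : (moveTwin G u v).Adj u b := by
    rw [← SimpleGraph.mem_edgeSet]
    exact hIns.1 _ (Finset.mem_insert_self _ _)
  rw [moveTwin_adj_u_iff] at hadj
  obtain ⟨hbu, hvb⟩ := hadj
  refine hmax s(v, b) (fun hmem => hv _ hmem (by simp)) ⟨?_, ?_⟩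
  · intro f hf
    rcases Finset.mem_insert.1 hf with rfl | hf
    · exact G.mem_edgeSet.2 hvb
    · exact hind.1 f hf
  · -- pairwise condition
    have key : ∀ f ∈ M, ∀ y ∈ f, ∀ x ∈ s(v, b), x ≠ y ∧ ¬ G.Adj x y := by
      intro f hf y hy x hx
      have hyu : y ≠ u := not_mem_of_avoids hu hf hy
      have hyv : y ≠ v := not_mem_of_avoids hv hf hy
      have hfne : s(u, b) ≠ f := fun hh => hu f hf (hh ▸ (by simp))
      have h1 := hIns.2 s(u, b) (Finset.mem_insert_self _ _) f (Finset.mem_insert_of_mem hf)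
        hfne u (by simp) y hy
      have h2 := hIns.2 s(u, b) (Finset.mem_insert_self _ _) f (Finset.mem_insert_of_mem hf)
        hfne b (by simp) y hy
      rcases Sym2.mem_iff.1 hx with rfl | rfl
      · refine ⟨hyv.symm, fun hvy => h1.2 ?_⟩
        rw [moveTwin_adj_u_iff]
        exact ⟨hyu, hvy⟩
      · refine ⟨h2.1, fun hby => h2.2 ?_⟩
        rw [moveTwin_adj_iff hbu hyu]
        exact hby
    intro e he f hf hef x hx y hy
    rcases Finset.mem_insert.1 he with rfl | he <;> rcases Finset.mem_insert.1 hf with rfl | hf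
    · exact absurd rfl hef
    · exact key f hf y hy x hx
    · obtain ⟨h1, h2⟩ := key e he x hx y hy
      exact ⟨h1.symm, fun hh => h2 hh.symm⟩
    · exact hind.2 e he f hf hef x hx y hy

/-- Auxiliary: if `M` covers `v` and avoids `u`, no edge at `u` can be added
in `moveTwin G u v`. -/
lemma auxB (hu : ∀ e ∈ M, u ∉ e) (hcov : MCovers M v) (b : V)
    (hIns : IsInducedMatching (moveTwin G u v) (insert s(u, b) M)) : False := by
  obtain ⟨f, hf, hvf⟩ := hcov
  induction f using Sym2.ind with
  | _ c d =>
    have hcu : c ≠ u := not_mem_of_avoids hu hf (by simp)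
    have hdu : d ≠ u := not_mem_of_avoids hu hf (by simp)
    have hadj : G.Adj c d := by
      have := hIns.1 _ (Finset.mem_insert_of_mem hf)
      rw [SimpleGraph.mem_edgeSet, moveTwin_adj_iff hcu hdu] at this
      exact this
    have hfne : s(u, b) ≠ s(c, d) := fun hh => hu _ hf (hh ▸ (by simp))
    rcases Sym2.mem_iff.1 hvf with hvc | hvd
    · have h1 := hIns.2 s(u, b) (Finset.mem_insert_self _ _) s(c, d)
        (Finset.mem_insert_of_mem hf) hfne u (by simp) d (by simp)
      exact h1.2 (moveTwin_adj_u_iff.2 ⟨hdu, by rw [hvc]; exact hadj⟩)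
    · have h1 := hIns.2 s(u, b) (Finset.mem_insert_self _ _) s(c, d)
        (Finset.mem_insert_of_mem hf) hfne u (by simp) c (by simp)
      exact h1.2 (moveTwin_adj_u_iff.2 ⟨hcu, by rw [hvd]; exact hadj.symm⟩)

lemma claimA (hA : IsMaximalInducedMatching G M) (hu : ∀ e ∈ M, u ∉ e)
    (hv : ∀ e ∈ M, v ∉ e) : IsMaximalInducedMatching (moveTwin G u v) M := by
  rw [maximal_iff] at hA ⊢
  obtain ⟨hind, hmax⟩ := hA
  refine ⟨(induced_iff_of_avoids hu).1 hind, ?_⟩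
  intro e he hIns
  induction e using Sym2.ind with
  | _ a b =>
    by_cases hau : a = u
    · subst hau; exact auxA hind hu hv hmax b hIns
    · by_cases hbu : b = u
      · subst hbu
        rw [Sym2.eq_swap] at hIns
        exact auxA hind hu hv hmax a hIns
      · have hu' : ∀ f ∈ insert s(a, b) M, u ∉ f := by
          intro f hf
          rcases Finset.mem_insert.1 hf with rfl | hf
          · simp [Ne.symm hau, Ne.symm hbu]
          · exact hu f hf
        exact hmax _ he ((induced_iff_of_avoids hu').2 hIns)

lemma claimB (hA : IsMaximalInducedMatching G M) (hu : ∀ e ∈ M, u ∉ e)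
    (hcov : MCovers M v) : IsMaximalInducedMatching (moveTwin G u v) M := by
  rw [maximal_iff] at hA ⊢
  obtain ⟨hind, hmax⟩ := hA
  refine ⟨(induced_iff_of_avoids hu).1 hind, ?_⟩
  intro e he hIns
  induction e using Sym2.ind with
  | _ a b =>
    by_cases hau : a = u
    · subst hau; exact auxB hu hcov b hIns
    · by_cases hbu : b = u
      · subst hbu
        rw [Sym2.eq_swap] at hIns
        exact auxB hu hcov a hIns
      · have hu' : ∀ f ∈ insert s(a, b) M, u ∉ f := by
          intro f hf
          rcases Finset.mem_insert.1 hf with rfl | hf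
          · simp [Ne.symm hau, Ne.symm hbu]
          · exact hu f hf
        exact hmax _ he ((induced_iff_of_avoids hu').2 hIns)


lemma moveTwin_adj_u_iff' {y : V} :
    (moveTwin G u v).Adj y u ↔ y ≠ u ∧ G.Adj v y := by
  rw [SimpleGraph.adj_comm, moveTwin_adj_u_iff]

lemma swap_adj (x y : V) :
    (moveTwin G u v).Adj (Equiv.swap u v x) (Equiv.swap u v y) ↔ (moveTwin G u v).Adj x y := by
  rcases eq_or_ne u v with rfl | huv
  · simp [Equiv.swap_self]
  have hirr : ∀ (H : SimpleGraph V) (a b : V), a = b → (H.Adj a b ↔ False) :=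
    fun H a b hab => iff_of_false (fun h => H.loopless.irrefl a (hab ▸ h)) id
  by_cases hxu : x = u
  · rw [hxu]
    by_cases hyu : y = u
    · rw [hyu]
      rw [hirr _ _ _ rfl, hirr (moveTwin G u v) _ _ rfl]
    by_cases hyv : y = v
    · rw [hyv]
      rw [Equiv.swap_apply_left, Equiv.swap_apply_right]
      exact SimpleGraph.adj_comm _ _ _
    · rw [Equiv.swap_apply_left, Equiv.swap_apply_of_ne_of_ne hyu hyv,
        moveTwin_adj_iff huv.symm hyu, moveTwin_adj_u_iff]
      exact ⟨fun h => ⟨hyu, h⟩, And.right⟩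
  by_cases hxv : x = v
  · rw [hxv]
    by_cases hyu : y = u
    · rw [hyu]
      rw [Equiv.swap_apply_right, Equiv.swap_apply_left]
      exact SimpleGraph.adj_comm _ _ _
    by_cases hyv : y = v
    · rw [hyv]
      rw [hirr _ _ _ rfl, hirr (moveTwin G u v) _ _ rfl]
    · rw [Equiv.swap_apply_right, Equiv.swap_apply_of_ne_of_ne hyu hyv,
        moveTwin_adj_u_iff, moveTwin_adj_iff huv.symm hyu]
      exact ⟨And.right, fun h => ⟨hyu, h⟩⟩
  · rw [Equiv.swap_apply_of_ne_of_ne hxu hxv]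
    by_cases hyu : y = u
    · rw [hyu]
      rw [Equiv.swap_apply_left, moveTwin_adj_iff hxu huv.symm, moveTwin_adj_u_iff']
      exact ⟨fun h => ⟨hxu, h.symm⟩, fun h => h.2.symm⟩
    by_cases hyv : y = v
    · rw [hyv]
      rw [Equiv.swap_apply_right, moveTwin_adj_u_iff', moveTwin_adj_iff hxu huv.symm]
      exact ⟨fun h => h.2.symm, fun h => ⟨hxu, h.symm⟩⟩
    · rw [Equiv.swap_apply_of_ne_of_ne hyu hyv]

/-- The embedding of `Sym2 V` induced by a permutation of `V`. -/
def symEmb (σ : V ≃ V) : Sym2 V ↪ Sym2 V :=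
  ⟨Sym2.map σ, Sym2.map.injective σ.injective⟩

lemma sym2_map_symm_map (σ : V ≃ V) (e : Sym2 V) :
    Sym2.map (⇑σ.symm) (Sym2.map (⇑σ) e) = e := by
  induction e using Sym2.ind with
  | _ a b => simp

lemma mem_symEmb_iff (σ : V ≃ V) {e : Sym2 V} {x : V} :
    x ∈ Sym2.map (⇑σ) e ↔ σ.symm x ∈ e := by
  rw [Sym2.mem_map]
  constructor
  · rintro ⟨a, ha, rfl⟩
    rwa [Equiv.symm_apply_apply]
  · intro h
    exact ⟨σ.symm x, h, Equiv.apply_symm_apply σ x⟩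

lemma induced_map {H : SimpleGraph V} (σ : V ≃ V)
    (hσ : ∀ x y, H.Adj (σ x) (σ y) ↔ H.Adj x y)
    (hM : IsInducedMatching H M) : IsInducedMatching H (M.map (symEmb σ)) := by
  constructor
  · intro e he
    rw [Finset.mem_map] at he
    obtain ⟨f, hf, rfl⟩ := he
    revert hf
    induction f using Sym2.ind with
    | _ a b =>
      intro hf
      show Sym2.map (⇑σ) s(a, b) ∈ H.edgeSet
      rw [Sym2.map_pair_eq, SimpleGraph.mem_edgeSet, hσ]
      exact H.mem_edgeSet.1 (hM.1 _ hf)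
  · intro e he f hf hef x hx y hy
    rw [Finset.mem_map] at he hf
    obtain ⟨e₀, he₀, rfl⟩ := he
    obtain ⟨f₀, hf₀, rfl⟩ := hf
    have hne : e₀ ≠ f₀ := fun hh => hef (by rw [hh])
    have hx' : σ.symm x ∈ e₀ := (mem_symEmb_iff σ).1 hx
    have hy' : σ.symm y ∈ f₀ := (mem_symEmb_iff σ).1 hy
    obtain ⟨h1, h2⟩ := hM.2 e₀ he₀ f₀ hf₀ hne _ hx' _ hy'
    refine ⟨fun hh => h1 (by rw [hh]), fun hh => h2 ?_⟩
    rw [← hσ, Equiv.apply_symm_apply, Equiv.apply_symm_apply]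
    exact hh

lemma map_symEmb_symm (σ : V ≃ V) (M : Finset (Sym2 V)) :
    (M.map (symEmb σ)).map (symEmb σ.symm) = M := by
  ext e
  simp only [Finset.mem_map, symEmb, Function.Embedding.coeFn_mk]
  constructor
  · rintro ⟨f, ⟨g, hg, rfl⟩, rfl⟩
    rwa [sym2_map_symm_map]
  · intro he
    exact ⟨Sym2.map (⇑σ) e, ⟨e, he, rfl⟩, sym2_map_symm_map σ e⟩

lemma maximal_map {H : SimpleGraph V} (σ : V ≃ V)
    (hσ : ∀ x y, H.Adj (σ x) (σ y) ↔ H.Adj x y)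
    (hM : IsMaximalInducedMatching H M) :
    IsMaximalInducedMatching H (M.map (symEmb σ)) := by
  have hσ' : ∀ x y, H.Adj (σ.symm x) (σ.symm y) ↔ H.Adj x y := fun x y => by
    have := hσ (σ.symm x) (σ.symm y)
    rwa [Equiv.apply_symm_apply, Equiv.apply_symm_apply, Iff.comm] at this
  refine ⟨induced_map σ hσ hM.1, ?_⟩
  intro M' hM' hsub
  have h2 : M ⊆ M'.map (symEmb σ.symm) := by
    intro e he
    rw [Finset.mem_map]
    exact ⟨Sym2.map (⇑σ) e, hsub (Finset.mem_map_of_mem _ he), sym2_map_symm_map σ e⟩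
  have h3 := hM.2 _ (induced_map σ.symm hσ' hM') h2
  have h4 := congrArg (Finset.map (symEmb σ)) h3
  have h5 : (M'.map (symEmb σ.symm)).map (symEmb σ) = M' := by
    have := map_symEmb_symm σ.symm M'
    rwa [Equiv.symm_symm] at this
  rwa [h5] at h4

lemma covers_map (σ : V ≃ V) {w : V} :
    MCovers (M.map (symEmb σ)) w ↔ MCovers M (σ.symm w) := by
  constructor
  · rintro ⟨e, he, hwe⟩
    rw [Finset.mem_map] at he
    obtain ⟨f, hf, rfl⟩ := he
    exact ⟨f, hf, (mem_symEmb_iff σ).1 hwe⟩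
  · rintro ⟨e, he, hwe⟩
    exact ⟨Sym2.map (⇑σ) e, Finset.mem_map_of_mem _ he, (mem_symEmb_iff σ).2 hwe⟩


lemma avoids_iff : (¬ MCovers M u) ↔ ∀ e ∈ M, u ∉ e := by
  simp [MCovers]

lemma key {V : Type*} [Fintype V] (G : SimpleGraph V) (u v : V) :
    {M : Finset (Sym2 V) | IsMaximalInducedMatching G M ∧ ¬ MCovers M u ∧ ¬ MCovers M v}.ncard
      + 2 * {M : Finset (Sym2 V) | IsMaximalInducedMatching G M ∧ MCovers M v
          ∧ ¬ MCovers M u}.ncard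
      ≤ mimCount (moveTwin G u v) := by
  classical
  set A0 : Set (Finset (Sym2 V)) :=
    {M | IsMaximalInducedMatching G M ∧ ¬ MCovers M u ∧ ¬ MCovers M v} with hA0def
  set Av : Set (Finset (Sym2 V)) :=
    {M | IsMaximalInducedMatching G M ∧ MCovers M v ∧ ¬ MCovers M u} with hAvdef
  set σ : V ≃ V := Equiv.swap u v with hσdef
  set img : Finset (Sym2 V) → Finset (Sym2 V) := fun M => M.map (symEmb σ) with himgdef
  have hσsymm : σ.symm = σ := Equiv.symm_swap u v
  have hσu : σ u = v := Equiv.swap_apply_left u v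
  have hσv : σ v = u := Equiv.swap_apply_right u v
  set S' : Set (Finset (Sym2 V)) := {M | IsMaximalInducedMatching (moveTwin G u v) M}
  -- the three subsets of S'
  have hA0sub : A0 ⊆ S' := by
    rintro M ⟨hM, hu, hv⟩
    exact claimA hM (avoids_iff.1 hu) (avoids_iff.1 hv)
  have hAvsub : Av ⊆ S' := by
    rintro M ⟨hM, hcv, hu⟩
    exact claimB hM (avoids_iff.1 hu) hcv
  have hImCov : ∀ M ∈ Av, MCovers (img M) u := by
    rintro M ⟨_, hcv, _⟩
    rw [himgdef]
    rw [covers_map σ, hσsymm, hσu]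
    exact hcv
  have hImsub : img '' Av ⊆ S' := by
    rintro e ⟨M, hMAv, rfl⟩
    exact maximal_map σ swap_adj (hAvsub hMAv)
  -- disjointness
  have d1 : Disjoint Av (img '' Av) := by
    rw [Set.disjoint_right]
    rintro a ⟨M, hMAv, rfl⟩ haAv
    exact haAv.2.2 (hImCov M hMAv)
  have d2 : Disjoint A0 (Av ∪ img '' Av) := by
    rw [Set.disjoint_left]
    rintro a ⟨_, hau, hav⟩ (h | ⟨M, hMAv, rfl⟩)
    · exact hav h.2.1
    · exact hau (hImCov M hMAv)
  have e3 : (img '' Av).ncard = Av.ncard :=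
    Set.ncard_image_of_injective _ (Finset.map_injective _)
  have e2 : (Av ∪ img '' Av).ncard = Av.ncard + Av.ncard := by
    rw [Set.ncard_union_eq d1 (Set.toFinite _) (Set.toFinite _), e3]
  have e1 : (A0 ∪ (Av ∪ img '' Av)).ncard = A0.ncard + (Av.ncard + Av.ncard) := by
    rw [Set.ncard_union_eq d2 (Set.toFinite _) (Set.toFinite _), e2]
  have hsub : A0 ∪ (Av ∪ img '' Av) ⊆ S' :=
    Set.union_subset hA0sub (Set.union_subset hAvsub hImsub)
  have := Set.ncard_le_ncard hsub (Set.toFinite _)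
  rw [e1] at this
  have hmc : mimCount (moveTwin G u v) = S'.ncard := rfl
  rw [hmc]
  omega

end MimAux


/-- If no maximal induced matching of `G` covers both `u` and `v`, then
`|M_{G_{u→v}}| ≥ |M_G|` or `|M_{G_{v→u}}| ≥ |M_G|`. -/
theorem mimCount_moveTwin {V : Type*} [Fintype V] (G : SimpleGraph V) (u v : V)
    (h : ∀ M : Finset (Sym2 V), IsMaximalInducedMatching G M →
      ¬ (MCovers M u ∧ MCovers M v)) :
    mimCount G ≤ mimCount (moveTwin G u v) ∨ mimCount G ≤ mimCount (moveTwin G v u) := by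
    classical
  set A0 : Set (Finset (Sym2 V)) :=
    {M | IsMaximalInducedMatching G M ∧ ¬ MCovers M u ∧ ¬ MCovers M v} with hA0def
  set Au : Set (Finset (Sym2 V)) :=
    {M | IsMaximalInducedMatching G M ∧ MCovers M u ∧ ¬ MCovers M v} with hAudef
  set Av : Set (Finset (Sym2 V)) :=
    {M | IsMaximalInducedMatching G M ∧ MCovers M v ∧ ¬ MCovers M u} with hAvdef
  have hset : {M : Finset (Sym2 V) | IsMaximalInducedMatching G M} = A0 ∪ (Au ∪ Av) := by
    ext M
    simp only [hA0def, hAudef, hAvdef, Set.mem_setOf_eq, Set.mem_union]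
    constructor
    · intro hM
      by_cases hu : MCovers M u
      · by_cases hv : MCovers M v
        · exact absurd ⟨hu, hv⟩ (h M hM)
        · exact Or.inr (Or.inl ⟨hM, hu, hv⟩)
      · by_cases hv : MCovers M v
        · exact Or.inr (Or.inr ⟨hM, hv, hu⟩)
        · exact Or.inl ⟨hM, hu, hv⟩
    · rintro (⟨hM, _⟩ | ⟨hM, _⟩ | ⟨hM, _⟩) <;> exact hM
  have d1 : Disjoint Au Av := by
    rw [Set.disjoint_left]
    rintro a ⟨_, hcu, _⟩ ⟨_, _, hnu⟩
    exact hnu hcu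
  have d2 : Disjoint A0 (Au ∪ Av) := by
    rw [Set.disjoint_left]
    rintro a ⟨_, hnu, hnv⟩ (⟨_, hcu, _⟩ | ⟨_, hcv, _⟩)
    exacts [hnu hcu, hnv hcv]
  have hcount : mimCount G = A0.ncard + (Au.ncard + Av.ncard) := by
    unfold mimCount
    rw [hset, Set.ncard_union_eq d2 (Set.toFinite _) (Set.toFinite _),
      Set.ncard_union_eq d1 (Set.toFinite _) (Set.toFinite _)]
  have key1 := MimAux.key G u v
  rw [← hA0def, ← hAvdef] at key1
  have key2 := MimAux.key G v u
  have hA0swap : {M : Finset (Sym2 V) | IsMaximalInducedMatching G M ∧ ¬ MCovers M v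
      ∧ ¬ MCovers M u} = A0 := by
    ext M
    simp only [hA0def, Set.mem_setOf_eq]
    tauto
  have hAuswap : {M : Finset (Sym2 V) | IsMaximalInducedMatching G M ∧ MCovers M u
      ∧ ¬ MCovers M v} = Au := rfl
  rw [hA0swap, hAuswap] at key2
  rcases le_total Au.ncard Av.ncard with hle | hle
  · left
    rw [hcount]
    omega
  · right
    rw [hcount]
    omega
end

section
/- Let G be a triangle-free finite simple graph and let u, v be non-adjacent vertices of G. Then the graph G_{T(u)→v}, obtained by making every vertex in the twin set of u into a twin of v, is triangle-free. -/
/-- The twin set of `u`: all vertices with the same open neighbourhood as `u`. -/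
def twinSet {V : Type*} (G : SimpleGraph V) (u : V) : Set V :=
  {w | G.neighborSet w = G.neighborSet u}

/-- `G_{T(u)→v}`: the graph obtained from `G` by making every vertex of the twin set
of `u` into a (false) twin of `v` (for non-adjacent `u`, `v`). -/
def moveTwinSetGraph {V : Type*} (G : SimpleGraph V) (u v : V) : SimpleGraph V where
  Adj x y :=
    (x ∈ twinSet G u ∧ y ∉ twinSet G u ∧ G.Adj v y) ∨
      (y ∈ twinSet G u ∧ x ∉ twinSet G u ∧ G.Adj v x) ∨
      (x ∉ twinSet G u ∧ y ∉ twinSet G u ∧ G.Adj x y)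
  symm := by
    constructor
    rintro x y (⟨h1, h2, h3⟩ | ⟨h1, h2, h3⟩ | ⟨h1, h2, h3⟩)
    · exact Or.inr (Or.inl ⟨h1, h2, h3⟩)
    · exact Or.inl ⟨h1, h2, h3⟩
    · exact Or.inr (Or.inr ⟨h2, h1, h3.symm⟩)
  loopless := by
    constructor
    rintro x (⟨h1, h2, _⟩ | ⟨h1, h2, _⟩ | ⟨_, _, h3⟩)
    exacts [h2 h1, h2 h1, G.loopless.irrefl x h3]

/-- If `G` is triangle-free and `u`, `v` are non-adjacent, then `G_{T(u)→v}` is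
triangle-free. -/
theorem moveTwinSetGraph_triangleFree {V : Type*} (G : SimpleGraph V) (u v : V)
    (hG : G.CliqueFree 3) (huv : ¬ G.Adj u v) :
    (moveTwinSetGraph G u v).CliqueFree 3 := by
  classical
  intro t ht
  rw [SimpleGraph.is3Clique_iff] at ht
  obtain ⟨a, b, c, hab, hac, hbc, -⟩ := ht
  have haux : ∀ x y z : V, G.Adj x y → G.Adj x z → G.Adj y z → False := fun x y z h1 h2 h3 =>
    hG _ (SimpleGraph.is3Clique_triple_iff.mpr ⟨h1, h2, h3⟩)
  rcases hab with ⟨h1, h2, h3⟩ | ⟨h1, h2, h3⟩ | ⟨h1, h2, h3⟩ <;>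
  rcases hac with ⟨h4, h5, h6⟩ | ⟨h4, h5, h6⟩ | ⟨h4, h5, h6⟩ <;>
  rcases hbc with ⟨h7, h8, h9⟩ | ⟨h7, h8, h9⟩ | ⟨h7, h8, h9⟩ <;>
    first
    | exact absurd ‹a ∈ twinSet G u› ‹a ∉ twinSet G u›
    | exact absurd ‹b ∈ twinSet G u› ‹b ∉ twinSet G u›
    | exact absurd ‹c ∈ twinSet G u› ‹c ∉ twinSet G u›
    | exact haux a b c ‹G.Adj a b› ‹G.Adj a c› ‹G.Adj b c›
    | exact haux v b c ‹G.Adj v b› ‹G.Adj v c› ‹G.Adj b c›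
    | exact haux v a c ‹G.Adj v a› ‹G.Adj v c› ‹G.Adj a c›
    | exact haux v a b ‹G.Adj v a› ‹G.Adj v b› ‹G.Adj a b›
end

section
/- Let G be a triangle-free finite simple graph and let u, v be non-adjacent vertices that are not twins. Then the number of twin sets of G_{T(u)→v} is strictly smaller than the number of twin sets of G. -/
/-- The number of twin sets (classes of the twin equivalence) of `G`. -/
noncomputable def twinClassCount {V : Type*} (G : SimpleGraph V) : ℕ :=
  {S : Set V | ∃ w, S = twinSet G w}.ncard

/-- If `G` is triangle-free and `u`, `v` are non-adjacent non-twins, then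
`G_{T(u)→v}` has strictly fewer twin sets than `G`. -/
theorem twinClassCount_moveTwinSetGraph {V : Type*} [Fintype V] (G : SimpleGraph V)
    (u v : V) (hG : G.CliqueFree 3) (huv : ¬ G.Adj u v)
    (hnt : G.neighborSet u ≠ G.neighborSet v) :
    twinClassCount (moveTwinSetGraph G u v) < twinClassCount G := by
  classical
  set G' := moveTwinSetGraph G u v with hG'
  -- Step 1: twins of G stay twins in G'
  have keyA : ∀ x y : V, G.neighborSet x = G.neighborSet y →
      G'.neighborSet x = G'.neighborSet y := by
    intro x y h
    have hT : x ∈ twinSet G u ↔ y ∈ twinSet G u := by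
      simp only [twinSet, Set.mem_setOf_eq, h]
    have hv : G.Adj v x ↔ G.Adj v y := by
      rw [G.adj_comm v x, ← SimpleGraph.mem_neighborSet, h,
        SimpleGraph.mem_neighborSet, G.adj_comm]
    ext z
    have hz : G.Adj x z ↔ G.Adj y z := by
      rw [← SimpleGraph.mem_neighborSet, h, SimpleGraph.mem_neighborSet]
    simp only [SimpleGraph.mem_neighborSet, hG', moveTwinSetGraph]
    tauto
  have hTwinEq : ∀ w' w : V, w' ∈ twinSet G w → twinSet G' w' = twinSet G' w := by
    intro w' w h
    have h' := keyA w' w h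
    unfold twinSet
    rw [h']
  -- Step 2: u and v become twins in G'
  have huT : u ∈ twinSet G u := rfl
  have hvT : v ∉ twinSet G u := fun h => hnt (Set.mem_setOf_eq ▸ h).symm
  have hBn : G'.neighborSet u = G'.neighborSet v := by
    ext z
    simp only [SimpleGraph.mem_neighborSet, hG', moveTwinSetGraph]
    constructor
    · rintro (⟨_, h2, h3⟩ | ⟨_, h2, _⟩ | ⟨h1, _, _⟩)
      · exact Or.inr (Or.inr ⟨hvT, h2, h3⟩)
      · exact absurd huT h2
      · exact absurd huT h1
    · rintro (⟨h1, _, _⟩ | ⟨_, _, h3⟩ | ⟨_, h2, h3⟩)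
      · exact absurd h1 hvT
      · exact absurd h3 (G.irrefl)
      · exact Or.inl ⟨huT, h2, h3⟩
  have hBT : twinSet G' v = twinSet G' u := by
    unfold twinSet; rw [hBn]
  -- The map on twin classes
  set F : Set V → Set V := fun S => ⋃ w ∈ S, twinSet G' w with hFdef
  have hF : ∀ w, F (twinSet G w) = twinSet G' w := by
    intro w
    apply subset_antisymm
    · intro z hz
      simp only [hFdef, Set.mem_iUnion] at hz
      obtain ⟨w', hw', hzw'⟩ := hz
      rwa [hTwinEq w' w hw'] at hzw'
    · intro z hz
      simp only [hFdef, Set.mem_iUnion]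
      exact ⟨w, rfl, hz⟩
  set S : Set (Set V) := {S : Set V | ∃ w, S = twinSet G w} with hSdef
  have hfin : S.Finite := by
    apply (Set.finite_range (twinSet G)).subset
    rintro T ⟨w, rfl⟩
    exact ⟨w, rfl⟩
  have himg : {T : Set V | ∃ w, T = twinSet G' w} = F '' S := by
    ext T
    constructor
    · rintro ⟨w, rfl⟩
      exact ⟨twinSet G w, ⟨w, rfl⟩, hF w⟩
    · rintro ⟨_, ⟨w, rfl⟩, rfl⟩
      exact ⟨w, hF w⟩
  have huS : twinSet G u ∈ S := ⟨u, rfl⟩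
  have hvS : twinSet G v ∈ S \ {twinSet G u} := by
    refine ⟨⟨v, rfl⟩, ?_⟩
    intro h
    exact hvT (h ▸ (rfl : v ∈ twinSet G v))
  have himg2 : F '' S = F '' (S \ {twinSet G u}) := by
    apply subset_antisymm
    · rintro _ ⟨T, hT, rfl⟩
      by_cases hcase : T = twinSet G u
      · subst hcase
        refine ⟨twinSet G v, hvS, ?_⟩
        rw [hF, hF, hBT]
      · exact ⟨T, ⟨hT, hcase⟩, rfl⟩
    · exact Set.image_mono Set.diff_subset
  calc twinClassCount G' = (F '' (S \ {twinSet G u})).ncard := by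
        rw [twinClassCount, himg, himg2]
    _ ≤ (S \ {twinSet G u}).ncard :=
        Set.ncard_image_le (hfin.subset Set.diff_subset)
    _ < S.ncard := Set.ncard_diff_singleton_lt_of_mem huS hfin
    _ = twinClassCount G := rfl
end
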